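/- (Covariance identity for a general fitness landscape.) Let f : E → ℝ be any fitness function with f ≥ 1 and f not identically 1, let x be a quasispecies solution for f with mean fitness λ = Σ_u f(u) x(u) = f̄. Let g : 𝒜 → ℝ and define G : E → ℝ by G(u) = Σ_{i=1}^{ℓ} g(u(i)). Set ḡ = (1/κ) Σ_{a∈𝒜} g(a), Ḡ = Σ_u G(u) x(u), and (fG)‾ = Σ_u f(u) G(u) x(u). Then f̄ · Ḡ = ρ · (fG)‾ + ℓ(1−ρ)· f̄ · ḡ, where ρ = 1 − κq/(κ−1). -/

import Mathlib

open scoped BigOperators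

/-- Covariance identity for a general fitness landscape on `𝒜^ℓ`:
`f̄ Ḡ = ρ (fG)‾ + ℓ(1-ρ) f̄ ḡ` for any additive functional `G(u) = ∑ᵢ g(u(i))`. -/
theorem covariance_identity_general_landscape
    (A : Type*) [Fintype A] [DecidableEq A] (κ ℓ : ℕ)
    (hκ : Fintype.card A = κ) (hκ2 : 2 ≤ κ) (hℓ : 1 ≤ ℓ)
    (q : ℝ) (hq0 : 0 < q) (hq1 : q < ((κ : ℝ) - 1) / κ)
    (ρ : ℝ) (hρ : ρ = 1 - κ * q / ((κ : ℝ) - 1))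
    (f : (Fin ℓ → A) → ℝ) (hf1 : ∀ u, 1 ≤ f u) (hfne : ∃ u, f u ≠ 1)
    (M : Matrix (Fin ℓ → A) (Fin ℓ → A) ℝ)
    (hM : ∀ u v, M u v =
      (q / ((κ : ℝ) - 1)) ^ hammingDist u v * (1 - q) ^ (ℓ - hammingDist u v))
    (x : (Fin ℓ → A) → ℝ) (hx0 : ∀ u, 0 ≤ x u) (hx1 : ∑ u, x u = 1)
    (hqs : ∀ u, x u * (∑ v, x v * f v) = ∑ v, x v * f v * M v u)
    (lam : ℝ) (hlam : lam = ∑ v, x v * f v)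
    (g : A → ℝ) (G : (Fin ℓ → A) → ℝ) (hG : ∀ u, G u = ∑ i, g (u i))
    (gbar : ℝ) (hgbar : gbar = (1 / (κ : ℝ)) * ∑ b, g b)
    (Gbar : ℝ) (hGbar : Gbar = ∑ u, G u * x u)
    (fGbar : ℝ) (hfGbar : fGbar = ∑ u, f u * G u * x u) :
    lam * Gbar = ρ * fGbar + ℓ * (1 - ρ) * lam * gbar := by
  have hκ1 : (1:ℝ) ≤ (κ:ℝ) - 1 := by
    have : (2:ℝ) ≤ (κ:ℝ) := by exact_mod_cast hκ2
    linarith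
  have hκ1ne : ((κ:ℝ) - 1) ≠ 0 := by linarith
  have hκne : (κ:ℝ) ≠ 0 := by positivity
  set m : A → A → ℝ := fun a b => if a = b then 1 - q else q / ((κ:ℝ) - 1) with hm
  -- factorization of M
  have hMfac : ∀ v u, M v u = ∏ i, m (v i) (u i) := by
    intro v u
    rw [hM]
    have : ∀ i : Fin ℓ, m (v i) (u i) = if v i = u i then 1 - q else q / ((κ:ℝ) - 1) := by
      intro i; simp [hm]
    simp_rw [this]
    rw [Finset.prod_ite]
    simp only [Finset.prod_const]
    have hd : hammingDist v u = (Finset.univ.filter (fun i => ¬ v i = u i)).card := by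
      rfl
    have hc : (Finset.univ.filter (fun i => v i = u i)).card
        = ℓ - hammingDist v u := by
      have := Finset.card_filter_add_card_filter_not
        (s := (Finset.univ : Finset (Fin ℓ))) (p := fun i => v i = u i)
      simp only [Finset.card_univ, Fintype.card_fin] at this
      omega
    rw [hc, ← hd]
    ring
  -- row sums of m
  have hrow : ∀ a : A, ∑ b, m a b = 1 := by
    intro a
    have : ∀ b, m a b = q / ((κ:ℝ) - 1) + (if a = b then (1 - q - q / ((κ:ℝ) - 1)) else 0) := by
      intro b; simp only [hm]; split <;> ring
    simp_rw [this, Finset.sum_add_distrib, Finset.sum_const, Finset.sum_ite_eq,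
      Finset.mem_univ, if_true, Finset.card_univ, hκ]
    field_simp
    rw [nsmul_eq_mul]
    field_simp
    ring
  have hcol : ∀ a : A, ∑ b, m a b * g b = ρ * g a + (1 - ρ) * gbar := by
    intro a
    have : ∀ b, m a b * g b = q / ((κ:ℝ) - 1) * g b
        + (if a = b then (1 - q - q / ((κ:ℝ) - 1)) * g b else 0) := by
      intro b; simp only [hm]; split <;> ring
    simp_rw [this, Finset.sum_add_distrib, ← Finset.mul_sum, Finset.sum_ite_eq,
      Finset.mem_univ, if_true, hρ, hgbar]
    field_simp
    ring
  -- key: ∑ u, M v u * G u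
  have hsum : ∀ v, ∑ u, M v u * G u = ρ * G v + ℓ * (1 - ρ) * gbar := by
    intro v
    have hj : ∀ j : Fin ℓ, ∑ u : Fin ℓ → A, M v u * g (u j)
        = ρ * g (v j) + (1 - ρ) * gbar := by
      intro j
      have h1 : ∀ u : Fin ℓ → A, M v u * g (u j)
          = ∏ i, (m (v i) (u i) * (if i = j then g (u i) else 1)) := by
        intro u
        rw [Finset.prod_mul_distrib, ← hMfac]
        congr 1
        rw [Finset.prod_ite_eq' Finset.univ j (fun i => g (u i))]
        simp
      simp_rw [h1]
      rw [← Fintype.prod_sum (fun i b => m (v i) b * (if i = j then g b else 1))]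
      rw [Finset.prod_eq_single j]
      · simp only [if_pos rfl]
        exact hcol (v j)
      · intro i _ hij
        simp only [if_neg hij, mul_one]
        exact hrow (v i)
      · simp
    calc ∑ u, M v u * G u = ∑ u, ∑ j, M v u * g (u j) := by
          simp_rw [hG, Finset.mul_sum]
      _ = ∑ j, ∑ u : Fin ℓ → A, M v u * g (u j) := Finset.sum_comm
      _ = ∑ j : Fin ℓ, (ρ * g (v j) + (1 - ρ) * gbar) := by simp_rw [hj]
      _ = ρ * G v + ℓ * (1 - ρ) * gbar := by
          rw [Finset.sum_add_distrib, ← Finset.mul_sum, ← hG]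
          simp [Finset.sum_const]
          ring
  -- main computation
  calc lam * Gbar = ∑ u, G u * (x u * lam) := by
        rw [hGbar, Finset.mul_sum]; exact Finset.sum_congr rfl fun u _ => by ring
    _ = ∑ u, G u * ∑ v, x v * f v * M v u := by
        simp_rw [hlam, hqs]
    _ = ∑ v, x v * f v * ∑ u, M v u * G u := by
        simp_rw [Finset.mul_sum]
        rw [Finset.sum_comm]
        congr 1; ext v; congr 1; ext u; ring
    _ = ∑ v, x v * f v * (ρ * G v + ℓ * (1 - ρ) * gbar) := by simp_rw [hsum]
    _ = ρ * fGbar + ℓ * (1 - ρ) * lam * gbar := by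
        rw [hfGbar, hlam]
        simp_rw [mul_add, Finset.sum_add_distrib]
        congr 1
        · rw [Finset.mul_sum]; exact Finset.sum_congr rfl fun v _ => by ring
        · rw [← Finset.sum_mul]; ring
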